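/- If L_i is the directed Laplacian of a simple directed cycle of length k on vertex set V_i with uniform weight w, and U_i = (L_i + L_iᵀ)/2, then L_iᵀ U_i† L_i equals (2w/k) times the Laplacian of the complete graph (clique) on the vertices V_i. -/
import Mathlib

open Matrix

/-- `B` is the Moore–Penrose pseudoinverse of `A` (the four Penrose conditions). -/
def IsMoorePenrose {m : Type*} [Fintype m] [DecidableEq m]
    (A B : Matrix m m ℝ) : Prop :=
  A * B * A = A ∧ B * A * B = B ∧ (A * B)ᵀ = A * B ∧ (B * A)ᵀ = B * A

namespace CycleCliqueAux

lemma mp_unique {m : Type*} [Fintype m] [DecidableEq m]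
    {A B C : Matrix m m ℝ} (hB : IsMoorePenrose A B) (hC : IsMoorePenrose A C) :
    B = C := by
  obtain ⟨hB1, hB2, hB3, hB4⟩ := hB
  obtain ⟨hC1, hC2, hC3, hC4⟩ := hC
  have hAB : A * B = A * C := by
    calc A * B = (A * C * A) * B := by rw [hC1]
    _ = (A * C) * (A * B) := by rw [Matrix.mul_assoc (A*C) A B]
    _ = (A * C)ᵀ * (A * B)ᵀ := by rw [hC3, hB3]
    _ = Cᵀ * (A * B * A)ᵀ := by simp only [Matrix.transpose_mul, Matrix.mul_assoc]
    _ = Cᵀ * Aᵀ := by rw [hB1]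
    _ = (A * C)ᵀ := by rw [Matrix.transpose_mul]
    _ = A * C := hC3
  have hBA : B * A = C * A := by
    calc B * A = B * (A * C * A) := by rw [hC1]
    _ = (B * A) * (C * A) := by simp only [Matrix.mul_assoc]
    _ = (B * A)ᵀ * (C * A)ᵀ := by rw [hB4, hC4]
    _ = ((A * B * A)ᵀ) * Cᵀ := by simp only [Matrix.transpose_mul, Matrix.mul_assoc]
    _ = Aᵀ * Cᵀ := by rw [hB1]
    _ = (C * A)ᵀ := by rw [Matrix.transpose_mul]
    _ = C * A := hC4
  calc B = B * A * B := hB2.symm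
  _ = (C * A) * B := by rw [hBA]
  _ = C * (A * B) := by rw [Matrix.mul_assoc]
  _ = C * (A * C) := by rw [hAB]
  _ = C * A * C := by rw [Matrix.mul_assoc]
  _ = C := hC2

variable {n : ℕ}

/-- The cyclic shift matrix. -/
def S (n : ℕ) : Matrix (Fin (n+2)) (Fin (n+2)) ℝ :=
  Matrix.of fun i j => if i = j + 1 then 1 else 0

/-- The all-ones matrix. -/
def Jm (n : ℕ) : Matrix (Fin (n+2)) (Fin (n+2)) ℝ := Matrix.of fun _ _ => 1

lemma S_mul (M : Matrix (Fin (n+2)) (Fin (n+2)) ℝ) (i j : Fin (n+2)) :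
    (S n * M) i j = M (i-1) j := by
  rw [Matrix.mul_apply, Finset.sum_eq_single (i-1)]
  · simp [S, sub_add_cancel]
  · intro m _ hm
    have h : i ≠ m + 1 := fun h => hm (by rw [h, add_sub_cancel_right])
    simp [S, h]
  · simp

lemma St_mul (M : Matrix (Fin (n+2)) (Fin (n+2)) ℝ) (i j : Fin (n+2)) :
    ((S n)ᵀ * M) i j = M (i+1) j := by
  rw [Matrix.mul_apply, Finset.sum_eq_single (i+1)]
  · simp [S]
  · intro m _ hm
    have h : m ≠ i + 1 := hm
    simp [S, h]
  · simp

lemma mul_S (M : Matrix (Fin (n+2)) (Fin (n+2)) ℝ) (i j : Fin (n+2)) :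
    (M * S n) i j = M i (j+1) := by
  rw [Matrix.mul_apply, Finset.sum_eq_single (j+1)]
  · simp [S]
  · intro m _ hm
    have h : m ≠ j + 1 := hm
    simp [S, h]
  · simp

lemma mul_St (M : Matrix (Fin (n+2)) (Fin (n+2)) ℝ) (i j : Fin (n+2)) :
    (M * (S n)ᵀ) i j = M i (j-1) := by
  rw [Matrix.mul_apply, Finset.sum_eq_single (j-1)]
  · simp [S, sub_add_cancel]
  · intro m _ hm
    have h : j ≠ m + 1 := fun h => hm (by rw [h, add_sub_cancel_right])
    simp [S, h]
  · simp

lemma S_mul_St : S n * (S n)ᵀ = 1 := by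
  ext i j
  rw [mul_St, Matrix.one_apply]
  simp [S, sub_add_cancel, eq_comm]

lemma St_mul_S : (S n)ᵀ * S n = 1 := by
  ext i j
  rw [St_mul, Matrix.one_apply]
  simp [S, add_left_inj, eq_comm]

lemma S_mul_J : S n * Jm n = Jm n := by
  ext i j; rw [S_mul]; rfl

lemma St_mul_J : (S n)ᵀ * Jm n = Jm n := by
  ext i j; rw [St_mul]; rfl

@[simp] lemma Jm_apply (i j : Fin (n+2)) : Jm n i j = 1 := rfl

lemma Jm_transpose : (Jm n)ᵀ = Jm n := by
  ext i j; rfl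

/-- values of `+1` in `Fin (n+2)` -/
lemma val_add_one (e : Fin (n+2)) :
    ((e + 1 : Fin (n+2))).val = if e.val + 1 = n + 2 then 0 else e.val + 1 := by
  have h : ((e + 1 : Fin (n+2))).val = (e.val + 1) % (n+2) := rfl
  rw [h]
  split_ifs with hc
  · rw [hc, Nat.mod_self]
  · exact Nat.mod_eq_of_lt (by have := e.isLt; omega)

lemma val_sub_one (e : Fin (n+2)) :
    ((e - 1 : Fin (n+2))).val = if e.val = 0 then n + 1 else e.val - 1 := by
  have h := val_add_one (e - 1)
  rw [sub_add_cancel] at h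
  have hlt := (e - 1).isLt
  split_ifs at h with hc <;> split_ifs with hc2 <;> omega

end CycleCliqueAux

open CycleCliqueAux

/-- If `L` is the directed Laplacian of the simple directed cycle of length `k`
with uniform weight `w` (edge `j → j+1` of weight `w` for each `j : Fin k`),
and `U = (L + Lᵀ)/2`, then `Lᵀ U† L = (2w/k) ·` (the Laplacian of the clique on the
`k` vertices). -/
theorem cycle_gives_clique {k : ℕ} [NeZero k] (hk : 2 ≤ k) (w : ℝ) (hw : 0 < w)
    (L U Up K : Matrix (Fin k) (Fin k) ℝ)
    (hL : L = Matrix.of fun i j => if i = j then w else if i = j + 1 then -w else 0)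
    (hU : U = (1 / 2 : ℝ) • (L + Lᵀ))
    (hUp : IsMoorePenrose U Up)
    (hK : K = Matrix.of fun i j => if i = j then (k : ℝ) - 1 else -1) :
    Lᵀ * Up * L = (2 * w / (k : ℝ)) • K := by
  obtain ⟨n, rfl⟩ : ∃ n, k = n + 2 := ⟨k - 2, by omega⟩
  have hw' : w ≠ 0 := ne_of_gt hw
  have hk0 : ((n:ℝ) + 2) ≠ 0 := by positivity
  have hkcast : ((n + 2 : ℕ) : ℝ) = (n : ℝ) + 2 := by push_cast; ring
  -- structural form of L, Lᵀ, U
  have hLS : L = w • 1 - w • S n := by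
    rw [hL]
    ext i j
    simp only [Matrix.of_apply, Matrix.sub_apply, Matrix.smul_apply, Matrix.one_apply,
      S, smul_eq_mul]
    by_cases hij : i = j
    · have h2 : ¬ i = j + 1 := by
        rw [hij]
        simp [left_eq_add]
      simp [hij, h2]
    · by_cases h2 : i = j + 1 <;> simp [hij, h2]
  have hLtS : Lᵀ = w • 1 - w • (S n)ᵀ := by
    rw [hLS]; simp [Matrix.transpose_smul, Matrix.transpose_sub]
  have hUS : U = w • (1 : Matrix (Fin (n+2)) (Fin (n+2)) ℝ)
      - (w/2) • S n - (w/2) • (S n)ᵀ := by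
    rw [hU, hLtS, hLS]
    match_scalars <;> ring
  have hUsymm : Uᵀ = U := by
    rw [hU]
    simp only [Matrix.transpose_smul, Matrix.transpose_add, Matrix.transpose_transpose]
    rw [add_comm Lᵀ L]
  -- U commutes with S and Sᵀ
  have hSU : S n * U = U * S n := by
    ext i j
    rw [S_mul, mul_S, hUS]
    simp only [Matrix.sub_apply, Matrix.smul_apply, Matrix.one_apply,
      Matrix.transpose_apply, Matrix.of_apply, S, smul_eq_mul]
    have e1 : (i - 1 = j) ↔ (i = j + 1) := sub_eq_iff_eq_add
    have e2 : (i - 1 = j + 1) ↔ (i = j + 1 + 1) := sub_eq_iff_eq_add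
    have e3 : (j = i - 1 + 1) ↔ (j + 1 = i + 1) := by rw [sub_add_cancel, add_left_inj]
    rw [if_congr e1 rfl rfl, if_congr e2 rfl rfl, if_congr e3 rfl rfl]
  have aStS : ∀ M : Matrix (Fin (n+2)) (Fin (n+2)) ℝ, (S n)ᵀ * (S n * M) = M := by
    intro M; rw [← Matrix.mul_assoc, St_mul_S, Matrix.one_mul]
  have hStU : (S n)ᵀ * U = U * (S n)ᵀ := by
    calc (S n)ᵀ * U = (S n)ᵀ * (U * (S n * (S n)ᵀ)) := by rw [S_mul_St, Matrix.mul_one]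
    _ = (S n)ᵀ * (S n * (U * (S n)ᵀ)) := by
        rw [← Matrix.mul_assoc U, ← hSU, Matrix.mul_assoc]
    _ = U * (S n)ᵀ := aStS _
  -- Penrose properties pass to the conjugate S Up Sᵀ, so Up commutes with S
  obtain ⟨p1, p2, p3, p4⟩ := hUp
  have p1m : ∀ M : Matrix (Fin (n+2)) (Fin (n+2)) ℝ, U * (Up * (U * M)) = U * M := by
    intro M
    rw [← Matrix.mul_assoc, ← Matrix.mul_assoc, p1]
  have p2m : ∀ M : Matrix (Fin (n+2)) (Fin (n+2)) ℝ, Up * (U * (Up * M)) = Up * M := by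
    intro M
    rw [← Matrix.mul_assoc, ← Matrix.mul_assoc, p2]
  have cSU : ∀ M : Matrix (Fin (n+2)) (Fin (n+2)) ℝ, S n * (U * M) = U * (S n * M) := by
    intro M; rw [← Matrix.mul_assoc, hSU, Matrix.mul_assoc]
  have cStU : ∀ M : Matrix (Fin (n+2)) (Fin (n+2)) ℝ,
      (S n)ᵀ * (U * M) = U * ((S n)ᵀ * M) := by
    intro M; rw [← Matrix.mul_assoc, hStU, Matrix.mul_assoc]
  have hUV' : U * (S n * Up * (S n)ᵀ) = S n * (U * (Up * (S n)ᵀ)) := by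
    simp only [Matrix.mul_assoc]
    rw [← cSU]
  have hVU' : (S n * Up * (S n)ᵀ) * U = S n * (Up * (U * (S n)ᵀ)) := by
    simp only [Matrix.mul_assoc, hStU]
  have hV : IsMoorePenrose U (S n * Up * (S n)ᵀ) := by
    refine ⟨?_, ?_, ?_, ?_⟩
    · calc U * (S n * Up * (S n)ᵀ) * U
          = U * (S n * (Up * ((S n)ᵀ * U))) := by simp only [Matrix.mul_assoc]
      _ = U * (S n * (Up * (U * (S n)ᵀ))) := by rw [hStU]
      _ = S n * (U * (Up * (U * (S n)ᵀ))) := by rw [cSU]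
      _ = S n * (U * (S n)ᵀ) := by rw [p1m]
      _ = S n * ((S n)ᵀ * U) := by rw [hStU]
      _ = (S n * (S n)ᵀ) * U := by rw [Matrix.mul_assoc]
      _ = U := by rw [S_mul_St, Matrix.one_mul]
    · calc (S n * Up * (S n)ᵀ) * U * (S n * Up * (S n)ᵀ)
          = S n * (Up * ((S n)ᵀ * (U * (S n * (Up * (S n)ᵀ))))) := by
            simp only [Matrix.mul_assoc]
      _ = S n * (Up * (U * ((S n)ᵀ * (S n * (Up * (S n)ᵀ))))) := by rw [cStU]
      _ = S n * (Up * (U * (Up * (S n)ᵀ))) := by rw [aStS]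
      _ = S n * (Up * (S n)ᵀ) := by rw [p2m]
      _ = S n * Up * (S n)ᵀ := by rw [Matrix.mul_assoc]
    · calc (U * (S n * Up * (S n)ᵀ))ᵀ
          = (S n * (U * Up * (S n)ᵀ))ᵀ := by rw [hUV']; simp only [Matrix.mul_assoc]
      _ = (U * Up * (S n)ᵀ)ᵀ * (S n)ᵀ := by rw [Matrix.transpose_mul]
      _ = ((S n)ᵀᵀ * (U * Up)ᵀ) * (S n)ᵀ := by rw [Matrix.transpose_mul (U * Up)]
      _ = S n * (U * Up) * (S n)ᵀ := by rw [Matrix.transpose_transpose, p3]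
      _ = S n * (U * (Up * (S n)ᵀ)) := by simp only [Matrix.mul_assoc]
      _ = U * (S n * Up * (S n)ᵀ) := by rw [hUV']
    · calc (S n * Up * (S n)ᵀ * U)ᵀ
          = (S n * (Up * U * (S n)ᵀ))ᵀ := by rw [hVU']; simp only [Matrix.mul_assoc]
      _ = (Up * U * (S n)ᵀ)ᵀ * (S n)ᵀ := by rw [Matrix.transpose_mul]
      _ = ((S n)ᵀᵀ * (Up * U)ᵀ) * (S n)ᵀ := by rw [Matrix.transpose_mul (Up * U)]
      _ = S n * (Up * U) * (S n)ᵀ := by rw [Matrix.transpose_transpose, p4]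
      _ = S n * (Up * (U * (S n)ᵀ)) := by simp only [Matrix.mul_assoc]
      _ = S n * Up * (S n)ᵀ * U := hVU'.symm
  -- uniqueness: Up is conjugation-invariant, hence commutes with S, Sᵀ, L, Lᵀ
  have hUpV : Up = S n * Up * (S n)ᵀ := mp_unique ⟨p1, p2, p3, p4⟩ hV
  have hUpS : Up * S n = S n * Up := by
    conv_lhs => rw [hUpV]
    calc (S n * Up * (S n)ᵀ) * S n = S n * (Up * ((S n)ᵀ * S n)) := by
          simp only [Matrix.mul_assoc]
    _ = S n * Up := by rw [St_mul_S, Matrix.mul_one]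
  have hUpSt : (S n)ᵀ * Up = Up * (S n)ᵀ := by
    conv_lhs => rw [hUpV]
    calc (S n)ᵀ * (S n * Up * (S n)ᵀ) = ((S n)ᵀ * S n) * (Up * (S n)ᵀ) := by
          simp only [Matrix.mul_assoc]
    _ = Up * (S n)ᵀ := by rw [St_mul_S, Matrix.one_mul]
  have hUpLt : Lᵀ * Up = Up * Lᵀ := by
    rw [hLtS]
    simp only [Matrix.sub_mul, Matrix.mul_sub, smul_mul_assoc,
      mul_smul_comm, Matrix.one_mul, Matrix.mul_one, hUpSt]
  have hLtL : Lᵀ * L = (2*w) • U := by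
    rw [hLtS, hLS, hUS]
    simp only [Matrix.sub_mul, Matrix.mul_sub, smul_mul_assoc,
      mul_smul_comm, Matrix.one_mul, Matrix.mul_one, St_mul_S]
    match_scalars <;> ring
  -- the all-ones matrix is killed by U
  have hUJ : U * Jm n = 0 := by
    rw [hUS]
    simp only [Matrix.sub_mul, smul_mul_assoc, Matrix.one_mul, S_mul_J, St_mul_J]
    match_scalars <;> ring
  set c : ℝ := (n : ℝ) + 2 with hc
  set g : ℕ → ℝ := fun d => -((d:ℝ) * (c - (d:ℝ))) / (w * c) with hg
  set B : Matrix (Fin (n+2)) (Fin (n+2)) ℝ :=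
    Matrix.of (fun i j => g ((i - j : Fin (n+2)).val)) with hB
  set Q : Matrix (Fin (n+2)) (Fin (n+2)) ℝ := 1 - c⁻¹ • Jm n with hQ
  have key : ∀ e : Fin (n+2),
      w * g e.val - (w/2) * g ((e - 1).val) - (w/2) * g ((e + 1).val)
      = (if e = 0 then 1 else 0) - 1/c := by
    intro e
    have hgp : g ((e + 1).val) = g (e.val + 1) := by
      rw [val_add_one]
      split_ifs with h
      · rw [h]
        simp only [hg, hc]
        push_cast
        ring
      · rfl
    rw [hgp]
    by_cases he : e = 0
    · have h0 : e.val = 0 := by rw [he]; rfl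
      rw [val_sub_one, if_pos h0, h0, if_pos he]
      simp only [hg, hc]
      push_cast
      field_simp
      ring
    · have h0 : e.val ≠ 0 := fun h => he (Fin.ext h)
      rw [val_sub_one, if_neg h0, if_neg he]
      have h1 : 1 ≤ e.val := Nat.one_le_iff_ne_zero.mpr h0
      simp only [hg, hc]
      rw [Nat.cast_sub h1]
      push_cast
      field_simp
      ring
  have hUB : U * B = Q := by
    have expand : U * B = w • B - (w/2) • (S n * B) - (w/2) • ((S n)ᵀ * B) := by
      rw [hUS]
      simp only [Matrix.sub_mul, smul_mul_assoc, Matrix.one_mul]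
    ext i j
    rw [expand]
    simp only [Matrix.sub_apply, Matrix.smul_apply, smul_eq_mul, S_mul, St_mul]
    have hBij : B i j = g ((i - j).val) := rfl
    have hBm : B (i-1) j = g (((i - j) - 1).val) := by
      rw [hB]
      simp only [Matrix.of_apply]
      rw [sub_right_comm]
    have hBp : B (i+1) j = g (((i - j) + 1).val) := by
      rw [hB]
      simp only [Matrix.of_apply]
      rw [add_sub_right_comm]
    rw [hBij, hBm, hBp, key (i - j)]
    have hiff : (i - j = 0) ↔ (i = j) := sub_eq_zero
    rw [hQ]
    simp only [Matrix.sub_apply, Matrix.smul_apply, Matrix.one_apply, Jm_apply,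
      Matrix.of_apply, smul_eq_mul, mul_one]
    rw [if_congr hiff rfl rfl, one_div]
  have hQsymm : Qᵀ = Q := by
    rw [hQ]
    simp only [Matrix.transpose_sub, Matrix.transpose_smul, Matrix.transpose_one,
      Jm_transpose]
  have hQBU : Q = Bᵀ * U := by
    calc Q = Qᵀ := hQsymm.symm
    _ = (U * B)ᵀ := by rw [hUB]
    _ = Bᵀ * Uᵀ := Matrix.transpose_mul _ _
    _ = Bᵀ * U := by rw [hUsymm]
  have hQP : Q * (Up * U) = Q := by
    rw [hQBU]
    calc Bᵀ * U * (Up * U) = Bᵀ * (U * Up * U) := by simp only [Matrix.mul_assoc]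
    _ = Bᵀ * U := by rw [p1]
  have hPQ : (Up * U) * Q = Up * U := by
    rw [hQ, Matrix.mul_sub, Matrix.mul_one, Matrix.mul_smul, Matrix.mul_assoc, hUJ,
      Matrix.mul_zero, smul_zero, sub_zero]
  have hP : Up * U = Q := by
    have h1 : Q * (Up * U) = Up * U := by
      have h2 := congrArg Matrix.transpose hPQ
      rwa [Matrix.transpose_mul, p4, hQsymm] at h2
    exact h1.symm.trans hQP
  have hKQ : (2 * w / c) • K = (2*w) • Q := by
    rw [hK, hQ]
    ext i j
    simp only [Matrix.smul_apply, Matrix.of_apply, Matrix.sub_apply, Matrix.one_apply,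
      Jm_apply, smul_eq_mul, hkcast]
    by_cases hij : i = j <;> simp only [hij, if_pos, if_true, if_neg, if_false,
      not_false_iff, mul_one, mul_zero] <;> field_simp <;> ring
  calc Lᵀ * Up * L = (Up * Lᵀ) * L := by rw [hUpLt]
  _ = Up * (Lᵀ * L) := by rw [Matrix.mul_assoc]
  _ = Up * ((2*w) • U) := by rw [hLtL]
  _ = (2*w) • (Up * U) := by rw [Matrix.mul_smul]
  _ = (2*w) • Q := by rw [hP]
  _ = (2 * w / c) • K := hKQ.symm
  _ = (2 * w / (↑(n + 2) : ℝ)) • K := by rw [hkcast]
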